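/- For every formula A, the axiom sequent A⊥, A has a cut-free proof in LLTN. -/

import Mathlib

/-- Formulae of propositional-variable-free linear logic. -/
inductive Fm : Type
  | zero | one | top | bot
  | tens (A B : Fm) | parr (A B : Fm)
  | plus (A B : Fm) | awith (A B : Fm)
  | quest (A : Fm) | bang (A : Fm)

/-- Linear negation (De Morgan duality). -/
def Fm.dual : Fm → Fm
  | .zero => .top
  | .top => .zero
  | .one => .bot
  | .bot => .one
  | .tens A B => .parr A.dual B.dual
  | .parr A B => .tens A.dual B.dual
  | .plus A B => .awith A.dual B.dual
  | .awith A B => .plus A.dual B.dual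
  | .quest A => .bang A.dual
  | .bang A => .quest A.dual

/-- A formula of the form ?C. -/
def IsQuest (A : Fm) : Prop := ∃ C, A = Fm.quest C

/-- ⅋⁰A = ⊥, ⅋ⁿ⁺¹A = (⅋ⁿA) ⅋ A. -/
def parrPow : ℕ → Fm → Fm
  | 0, _ => .bot
  | n + 1, A => .parr (parrPow n A) A

/-- ⊗⁰A = 1, ⊗ⁿ⁺¹A = (⊗ⁿA) ⊗ A. -/
def tensPow : ℕ → Fm → Fm
  | 0, _ => .one
  | n + 1, A => .tens (tensPow n A) A

/-- One-sided sequent calculus LL.  `Γ, A` is encoded as `Γ ++ [A]`. -/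
inductive LL : List Fm → Prop
  | one : LL [Fm.one]
  | bot {Γ} : LL Γ → LL (Γ ++ [Fm.bot])
  | top (Γ) : LL (Γ ++ [Fm.top])
  | tens {Γ Δ A B} : LL (Γ ++ [A]) → LL (Δ ++ [B]) → LL (Γ ++ Δ ++ [Fm.tens A B])
  | parr {Γ A B} : LL (Γ ++ [A, B]) → LL (Γ ++ [Fm.parr A B])
  | plusl {Γ A B} : LL (Γ ++ [A]) → LL (Γ ++ [Fm.plus A B])
  | plusr {Γ A B} : LL (Γ ++ [B]) → LL (Γ ++ [Fm.plus A B])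
  | awith {Γ A B} : LL (Γ ++ [A]) → LL (Γ ++ [B]) → LL (Γ ++ [Fm.awith A B])
  | der {Γ A} : LL (Γ ++ [A]) → LL (Γ ++ [Fm.quest A])
  | wk {Γ A} : LL Γ → LL (Γ ++ [Fm.quest A])
  | ctr {Γ A} : LL (Γ ++ [Fm.quest A, Fm.quest A]) → LL (Γ ++ [Fm.quest A])
  | prom {Γ A} : (∀ C ∈ Γ, IsQuest C) → LL (Γ ++ [A]) → LL (Γ ++ [Fm.bang A])
  | ex {Γ Δ A B} : LL (Γ ++ [B, A] ++ Δ) → LL (Γ ++ [A, B] ++ Δ)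
  | cut {Γ Δ A} : LL (Γ ++ [A]) → LL (Fm.dual A :: Δ) → LL (Γ ++ Δ)

/-- LLT: LL with the tensor rule replaced by NewTens. -/
inductive LLT : List Fm → Prop
  | one : LLT [Fm.one]
  | bot {Γ} : LLT Γ → LLT (Γ ++ [Fm.bot])
  | top (Γ) : LLT (Γ ++ [Fm.top])
  | newtens {Γ Δ Θ A B} : (∀ C ∈ Θ, IsQuest C) →
      LLT (Γ ++ Θ ++ [A]) → LLT (Δ ++ Θ ++ [B]) →
      LLT (Γ ++ Δ ++ Θ ++ [Fm.tens A B])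
  | parr {Γ A B} : LLT (Γ ++ [A, B]) → LLT (Γ ++ [Fm.parr A B])
  | plusl {Γ A B} : LLT (Γ ++ [A]) → LLT (Γ ++ [Fm.plus A B])
  | plusr {Γ A B} : LLT (Γ ++ [B]) → LLT (Γ ++ [Fm.plus A B])
  | awith {Γ A B} : LLT (Γ ++ [A]) → LLT (Γ ++ [B]) → LLT (Γ ++ [Fm.awith A B])
  | der {Γ A} : LLT (Γ ++ [A]) → LLT (Γ ++ [Fm.quest A])
  | wk {Γ A} : LLT Γ → LLT (Γ ++ [Fm.quest A])
  | ctr {Γ A} : LLT (Γ ++ [Fm.quest A, Fm.quest A]) → LLT (Γ ++ [Fm.quest A])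
  | prom {Γ A} : (∀ C ∈ Γ, IsQuest C) → LLT (Γ ++ [A]) → LLT (Γ ++ [Fm.bang A])
  | ex {Γ Δ A B} : LLT (Γ ++ [B, A] ++ Δ) → LLT (Γ ++ [A, B] ++ Δ)
  | cut {Γ Δ A} : LLT (Γ ++ [A]) → LLT (Fm.dual A :: Δ) → LLT (Γ ++ Δ)

/-- cc-free provability in LLT: LLT without cut and without contraction. -/
inductive LLTcc : List Fm → Prop
  | one : LLTcc [Fm.one]
  | bot {Γ} : LLTcc Γ → LLTcc (Γ ++ [Fm.bot])
  | top (Γ) : LLTcc (Γ ++ [Fm.top])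
  | newtens {Γ Δ Θ A B} : (∀ C ∈ Θ, IsQuest C) →
      LLTcc (Γ ++ Θ ++ [A]) → LLTcc (Δ ++ Θ ++ [B]) →
      LLTcc (Γ ++ Δ ++ Θ ++ [Fm.tens A B])
  | parr {Γ A B} : LLTcc (Γ ++ [A, B]) → LLTcc (Γ ++ [Fm.parr A B])
  | plusl {Γ A B} : LLTcc (Γ ++ [A]) → LLTcc (Γ ++ [Fm.plus A B])
  | plusr {Γ A B} : LLTcc (Γ ++ [B]) → LLTcc (Γ ++ [Fm.plus A B])
  | awith {Γ A B} : LLTcc (Γ ++ [A]) → LLTcc (Γ ++ [B]) → LLTcc (Γ ++ [Fm.awith A B])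
  | der {Γ A} : LLTcc (Γ ++ [A]) → LLTcc (Γ ++ [Fm.quest A])
  | wk {Γ A} : LLTcc Γ → LLTcc (Γ ++ [Fm.quest A])
  | prom {Γ A} : (∀ C ∈ Γ, IsQuest C) → LLTcc (Γ ++ [A]) → LLTcc (Γ ++ [Fm.bang A])
  | ex {Γ Δ A B} : LLTcc (Γ ++ [B, A] ++ Δ) → LLTcc (Γ ++ [A, B] ++ Δ)

/-- LLTN: LLT with contraction, weakening, dereliction and promotion replaced by
n-ary dereliction and the infinitary (!) rule. -/
inductive LLTN : List Fm → Prop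
  | one : LLTN [Fm.one]
  | bot {Γ} : LLTN Γ → LLTN (Γ ++ [Fm.bot])
  | top (Γ) : LLTN (Γ ++ [Fm.top])
  | newtens {Γ Δ Θ A B} : (∀ C ∈ Θ, IsQuest C) →
      LLTN (Γ ++ Θ ++ [A]) → LLTN (Δ ++ Θ ++ [B]) →
      LLTN (Γ ++ Δ ++ Θ ++ [Fm.tens A B])
  | parr {Γ A B} : LLTN (Γ ++ [A, B]) → LLTN (Γ ++ [Fm.parr A B])
  | plusl {Γ A B} : LLTN (Γ ++ [A]) → LLTN (Γ ++ [Fm.plus A B])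
  | plusr {Γ A B} : LLTN (Γ ++ [B]) → LLTN (Γ ++ [Fm.plus A B])
  | awith {Γ A B} : LLTN (Γ ++ [A]) → LLTN (Γ ++ [B]) → LLTN (Γ ++ [Fm.awith A B])
  | nder {Γ A} (n : ℕ) : LLTN (Γ ++ [parrPow n A]) → LLTN (Γ ++ [Fm.quest A])
  | bang {Γ A} : (∀ n : ℕ, LLTN (Γ ++ [tensPow n A])) → LLTN (Γ ++ [Fm.bang A])
  | ex {Γ Δ A B} : LLTN (Γ ++ [B, A] ++ Δ) → LLTN (Γ ++ [A, B] ++ Δ)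
  | cut {Γ Δ A} : LLTN (Γ ++ [A]) → LLTN (Fm.dual A :: Δ) → LLTN (Γ ++ Δ)

/-- Cut-free provability in LLTN. -/
inductive LLTNcf : List Fm → Prop
  | one : LLTNcf [Fm.one]
  | bot {Γ} : LLTNcf Γ → LLTNcf (Γ ++ [Fm.bot])
  | top (Γ) : LLTNcf (Γ ++ [Fm.top])
  | newtens {Γ Δ Θ A B} : (∀ C ∈ Θ, IsQuest C) →
      LLTNcf (Γ ++ Θ ++ [A]) → LLTNcf (Δ ++ Θ ++ [B]) →
      LLTNcf (Γ ++ Δ ++ Θ ++ [Fm.tens A B])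
  | parr {Γ A B} : LLTNcf (Γ ++ [A, B]) → LLTNcf (Γ ++ [Fm.parr A B])
  | plusl {Γ A B} : LLTNcf (Γ ++ [A]) → LLTNcf (Γ ++ [Fm.plus A B])
  | plusr {Γ A B} : LLTNcf (Γ ++ [B]) → LLTNcf (Γ ++ [Fm.plus A B])
  | awith {Γ A B} : LLTNcf (Γ ++ [A]) → LLTNcf (Γ ++ [B]) → LLTNcf (Γ ++ [Fm.awith A B])
  | nder {Γ A} (n : ℕ) : LLTNcf (Γ ++ [parrPow n A]) → LLTNcf (Γ ++ [Fm.quest A])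
  | bang {Γ A} : (∀ n : ℕ, LLTNcf (Γ ++ [tensPow n A])) → LLTNcf (Γ ++ [Fm.bang A])
  | ex {Γ Δ A B} : LLTNcf (Γ ++ [B, A] ++ Δ) → LLTNcf (Γ ++ [A, B] ++ Δ)

/-- Γ has a bounded proof in LLTN: either a cut-free proof, or a single final cut
whose premises (a proof of a single formula A and a proof of A⊥, Γ) are cut-free. -/
def BoundedLLTN (Γ : List Fm) : Prop :=
  LLTNcf Γ ∨ ∃ A : Fm, LLTNcf [A] ∧ LLTNcf (Fm.dual A :: Γ)

/-- The duplicator formula dup(A) = !( ?(A⊥) ⅋ (!A ⊗ !A) ). -/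
def dup (A : Fm) : Fm :=
  Fm.bang (Fm.parr (Fm.quest A.dual) (Fm.tens (Fm.bang A) (Fm.bang A)))

/-- For every formula A, the axiom sequent A⊥, A has a cut-free
proof in LLTN. -/
lemma Fm.dual_dual (A : Fm) : A.dual.dual = A := by
  induction A <;> simp [Fm.dual, *]

lemma LLTNcf.swap2 {A B : Fm} (h : LLTNcf [A, B]) : LLTNcf [B, A] := by
  have := LLTNcf.ex (Γ := []) (Δ := []) (A := B) (B := A) (by simpa using h)
  simpa using this

lemma LLTNcf.rot3 {A B C : Fm} (h : LLTNcf [A, B, C]) : LLTNcf [C, A, B] := by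
  have h1 := LLTNcf.ex (Γ := [A]) (Δ := []) (A := C) (B := B) (by simpa using h)
  have h2 := LLTNcf.ex (Γ := []) (Δ := [B]) (A := C) (B := A) (by simpa using h1)
  simpa using h2

lemma lltn_pow {A : Fm} (h : LLTNcf [A.dual, A]) :
    ∀ n, LLTNcf [parrPow n A, tensPow n A.dual] := by
  intro n
  induction n with
  | zero =>
      have h1 := LLTNcf.bot (Γ := [Fm.one]) LLTNcf.one
      exact (by simpa using h1 : LLTNcf [Fm.one, Fm.bot]).swap2
  | succ n ih =>
      have h2 : LLTNcf [A, A.dual] := h.swap2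
      have h3 := LLTNcf.newtens (Γ := [parrPow n A]) (Δ := [A]) (Θ := [])
        (A := tensPow n A.dual) (B := A.dual) (by simp)
        (by simpa using ih) (by simpa using h2)
      have h4 : LLTNcf [parrPow n A, A, Fm.tens (tensPow n A.dual) A.dual] := by
        simpa using h3
      have h5 := h4.rot3
      have h6 := LLTNcf.parr (Γ := [Fm.tens (tensPow n A.dual) A.dual])
        (A := parrPow n A) (B := A) (by simpa using h5)
      exact (by simpa [parrPow, tensPow] using h6 :
        LLTNcf [tensPow (n+1) A.dual, parrPow (n+1) A]).swap2

theorem lltn_axiom (A : Fm) : LLTNcf [Fm.dual A, A] := by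
  induction A with
  | zero =>
      exact (by simpa using LLTNcf.top [Fm.zero] : LLTNcf [Fm.zero, Fm.top]).swap2
  | top => simpa [Fm.dual] using LLTNcf.top [Fm.zero]
  | one =>
      have h1 := LLTNcf.bot (Γ := [Fm.one]) LLTNcf.one
      exact (by simpa using h1 : LLTNcf [Fm.one, Fm.bot]).swap2
  | bot =>
      simpa [Fm.dual] using LLTNcf.bot (Γ := [Fm.one]) LLTNcf.one
  | tens A B ihA ihB =>
      have h3 := LLTNcf.newtens (Γ := [A.dual]) (Δ := [B.dual]) (Θ := [])
        (A := A) (B := B) (by simp) (by simpa using ihA) (by simpa using ihB)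
      have h4 : LLTNcf [A.dual, B.dual, Fm.tens A B] := by simpa using h3
      have h5 := h4.rot3
      have h6 := LLTNcf.parr (Γ := [Fm.tens A B]) (A := A.dual) (B := B.dual)
        (by simpa using h5)
      exact (by simpa [Fm.dual] using (by simpa using h6 :
        LLTNcf [Fm.tens A B, Fm.parr A.dual B.dual]).swap2)
  | parr A B ihA ihB =>
      have h3 := LLTNcf.newtens (Γ := [A]) (Δ := [B]) (Θ := [])
        (A := A.dual) (B := B.dual) (by simp)
        (by simpa using ihA.swap2) (by simpa using ihB.swap2)
      have h4 : LLTNcf [A, B, Fm.tens A.dual B.dual] := by simpa using h3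
      have h5 := h4.rot3
      have h6 := LLTNcf.parr (Γ := [Fm.tens A.dual B.dual]) (A := A) (B := B)
        (by simpa using h5)
      simpa [Fm.dual] using h6
  | plus A B ihA ihB =>
      have hA := LLTNcf.plusl (Γ := [A.dual]) (A := A) (B := B)
        (by simpa using ihA)
      have hB := LLTNcf.plusr (Γ := [B.dual]) (A := A) (B := B)
        (by simpa using ihB)
      have h : LLTNcf [Fm.plus A B, Fm.awith A.dual B.dual] := by
        have := LLTNcf.awith (Γ := [Fm.plus A B]) (A := A.dual) (B := B.dual)
          (by simpa using (by simpa using hA : LLTNcf [A.dual, Fm.plus A B]).swap2)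
          (by simpa using (by simpa using hB : LLTNcf [B.dual, Fm.plus A B]).swap2)
        simpa using this
      exact (by simpa [Fm.dual] using h.swap2)
  | awith A B ihA ihB =>
      have hA := LLTNcf.plusl (Γ := [A]) (A := A.dual) (B := B.dual)
        (by simpa using ihA.swap2)
      have hB := LLTNcf.plusr (Γ := [B]) (A := A.dual) (B := B.dual)
        (by simpa using ihB.swap2)
      have h := LLTNcf.awith (Γ := [Fm.plus A.dual B.dual]) (A := A) (B := B)
        (by simpa using (by simpa using hA : LLTNcf [A, Fm.plus A.dual B.dual]).swap2)
        (by simpa using (by simpa using hB : LLTNcf [B, Fm.plus A.dual B.dual]).swap2)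
      simpa [Fm.dual] using h
  | quest C ih =>
      have key : ∀ n : ℕ, LLTNcf [Fm.quest C, tensPow n C.dual] := by
        intro n
        have hp := lltn_pow ih n
        have h1 := LLTNcf.nder (Γ := [tensPow n C.dual]) (A := C) n
          (by simpa using hp.swap2)
        exact (by simpa using h1 : LLTNcf [tensPow n C.dual, Fm.quest C]).swap2
      have h := LLTNcf.bang (Γ := [Fm.quest C]) (A := C.dual)
        (by intro n; simpa using key n)
      exact (by simpa [Fm.dual] using (by simpa using h :
        LLTNcf [Fm.quest C, Fm.bang C.dual]).swap2)
  | bang C ih =>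
      have ih' : LLTNcf [C.dual.dual, C.dual] := by rw [Fm.dual_dual]; exact ih.swap2
      have key : ∀ n : ℕ, LLTNcf [Fm.quest C.dual, tensPow n C] := by
        intro n
        have hp := lltn_pow ih' n
        rw [Fm.dual_dual] at hp
        have h1 := LLTNcf.nder (Γ := [tensPow n C]) (A := C.dual) n
          (by simpa using hp.swap2)
        exact (by simpa using h1 : LLTNcf [tensPow n C, Fm.quest C.dual]).swap2
      have h := LLTNcf.bang (Γ := [Fm.quest C.dual]) (A := C)
        (by intro n; simpa using key n)
      simpa [Fm.dual] using h
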